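/- arXiv:1712.08397 — 5 statements merged into one kernel-verified Lean document; each statement's English description precedes it below -/
import Mathlib

section
/- Let $\mathcal{K}=(\mathcal{A},\{x^1,\ldots,x^m\},g)$ be a Kähler–Poisson algebra and define $\mathcal{D}^{ij}=\eta\{x^i,x^l\}g_{lk}\{x^j,x^k\}$ and $\mathcal{D}^i_{\ j}=\mathcal{D}^{ik}g_{kj}$. Then the map $\mathcal{D}:\mathcal{A}^m\to\mathcal{A}^m$, $\mathcal{D}(X)^i=\mathcal{D}^i_{\ j}X^j$, is an orthogonal projection with respect to $g(X,Y)=X^ig_{ij}Y^j$: that is, $\mathcal{D}^2=\mathcal{D}$ and $g(\mathcal{D}(X),Y)=g(X,\mathcal{D}(Y))$ for all $X,Y\in\mathcal{A}^m$. -/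
/-- `𝒟^{ij} = η {xⁱ, xˡ} g_{lk} {xʲ, xᵏ}`. -/
def Dmat {A : Type*} [CommRing A] {m : ℕ} (P : A → A → A) (x : Fin m → A)
    (g : Fin m → Fin m → A) (η : A) (i j : Fin m) : A :=
  η * ∑ l, ∑ k, P (x i) (x l) * g l k * P (x j) (x k)

/-- `𝒟^i_j = 𝒟^{ik} g_{kj}`. -/
def Dlow {A : Type*} [CommRing A] {m : ℕ} (P : A → A → A) (x : Fin m → A)
    (g : Fin m → Fin m → A) (η : A) (i j : Fin m) : A :=
  ∑ k, Dmat P x g η i k * g k j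

/-- `𝒟(X)^i = 𝒟^i_j X^j`. -/
def Dmap {A : Type*} [CommRing A] {m : ℕ} (P : A → A → A) (x : Fin m → A)
    (g : Fin m → Fin m → A) (η : A) (X : Fin m → A) : Fin m → A :=
  fun i => ∑ j, Dlow P x g η i j * X j

/-- The bilinear form `g(X,Y) = Xⁱ g_{ij} Yʲ` on `Aᵐ`. -/
def gvec {A : Type*} [CommRing A] {m : ℕ} (g : Fin m → Fin m → A)
    (X Y : Fin m → A) : A :=
  ∑ i, ∑ j, X i * g i j * Y j

section Aux

variable {A : Type*} [AddCommMonoid A] {m : ℕ}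

lemma swap23 (G : Fin m → Fin m → Fin m → Fin m → A) :
    (∑ a, ∑ b, ∑ c, ∑ d, G a b c d) = ∑ a, ∑ c, ∑ b, ∑ d, G a b c d :=
  Finset.sum_congr rfl fun _ _ => Finset.sum_comm

lemma swap34 (G : Fin m → Fin m → Fin m → Fin m → A) :
    (∑ a, ∑ b, ∑ c, ∑ d, G a b c d) = ∑ a, ∑ b, ∑ d, ∑ c, G a b c d :=
  Finset.sum_congr rfl fun _ _ => Finset.sum_congr rfl fun _ _ => Finset.sum_comm

lemma reorder4 (F : Fin m → Fin m → Fin m → Fin m → A) :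
    (∑ i, ∑ j, ∑ k, ∑ l, F i j k l) = ∑ l, ∑ k, ∑ i, ∑ j, F i j k l := by
  calc (∑ i, ∑ j, ∑ k, ∑ l, F i j k l)
      = ∑ i, ∑ j, ∑ l, ∑ k, F i j k l := swap34 _
    _ = ∑ i, ∑ l, ∑ j, ∑ k, F i j k l := swap23 _
    _ = ∑ l, ∑ i, ∑ j, ∑ k, F i j k l := Finset.sum_comm
    _ = ∑ l, ∑ i, ∑ k, ∑ j, F i j k l := swap34 _
    _ = ∑ l, ∑ k, ∑ i, ∑ j, F i j k l := swap23 _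

lemma cycle4 (F : Fin m → Fin m → Fin m → Fin m → A) :
    (∑ a, ∑ b, ∑ c, ∑ d, F a b c d) = ∑ b, ∑ c, ∑ d, ∑ a, F a b c d := by
  calc (∑ a, ∑ b, ∑ c, ∑ d, F a b c d)
      = ∑ b, ∑ a, ∑ c, ∑ d, F a b c d := Finset.sum_comm
    _ = ∑ b, ∑ c, ∑ a, ∑ d, F a b c d := swap23 _
    _ = ∑ b, ∑ c, ∑ d, ∑ a, F a b c d := swap34 _

end Aux

lemma key {A : Type*} [CommRing A]
    (P : A → A → A)
    (hP_antisym : ∀ a b, P a b = - P b a)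
    {m : ℕ} (x : Fin m → A) (g : Fin m → Fin m → A)
    (η : A)
    (hKP : ∀ a b, η * (∑ i, ∑ j, ∑ k, ∑ l,
        P a (x i) * g i j * P (x j) (x k) * g k l * P (x l) b) = - P a b)
    (p : Fin m) (b : A) :
    (∑ j, Dlow P x g η p j * P (x j) b) = P (x p) b := by
  have h := hKP (x p) b
  unfold Dlow Dmat
  simp only [Finset.sum_mul, Finset.mul_sum] at h ⊢
  rw [reorder4] at h
  rw [show P (x p) b = -(-(P (x p) b)) by ring, ← h]
  rw [← Finset.sum_neg_distrib]
  refine Finset.sum_congr rfl fun o1 _ => ?_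
  rw [← Finset.sum_neg_distrib]
  refine Finset.sum_congr rfl fun o2 _ => ?_
  rw [← Finset.sum_neg_distrib]
  refine Finset.sum_congr rfl fun o3 _ => ?_
  rw [← Finset.sum_neg_distrib]
  refine Finset.sum_congr rfl fun o4 _ => ?_
  rw [hP_antisym (x o2) (x o4)]
  ring

lemma Dlow_idem {A : Type*} [CommRing A]
    (P : A → A → A)
    (hP_antisym : ∀ a b, P a b = - P b a)
    {m : ℕ} (x : Fin m → A) (g : Fin m → Fin m → A)
    (η : A)
    (hKP : ∀ a b, η * (∑ i, ∑ j, ∑ k, ∑ l,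
        P a (x i) * g i j * P (x j) (x k) * g k l * P (x l) b) = - P a b)
    (i k : Fin m) :
    (∑ j, Dlow P x g η i j * Dlow P x g η j k) = Dlow P x g η i k := by
  have step1 : (∑ j, Dlow P x g η i j * Dlow P x g η j k)
      = ∑ j, Dlow P x g η i j *
          ∑ a, (η * ∑ l, ∑ c, P (x j) (x l) * g l c * P (x a) (x c)) * g a k := rfl
  rw [step1]
  simp only [Finset.mul_sum, Finset.sum_mul]
  rw [cycle4]
  have step2 : ∀ a l c, (∑ j, Dlow P x g η i j *
        (η * (P (x j) (x l) * g l c * P (x a) (x c)) * g a k))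
      = P (x i) (x l) * (η * g l c * P (x a) (x c) * g a k) := by
    intro a l c
    calc (∑ j, Dlow P x g η i j *
          (η * (P (x j) (x l) * g l c * P (x a) (x c)) * g a k))
        = ∑ j, (Dlow P x g η i j * P (x j) (x l)) *
            (η * g l c * P (x a) (x c) * g a k) :=
          Finset.sum_congr rfl fun j _ => by ring
      _ = (∑ j, Dlow P x g η i j * P (x j) (x l)) *
            (η * g l c * P (x a) (x c) * g a k) := by rw [Finset.sum_mul]
      _ = P (x i) (x l) * (η * g l c * P (x a) (x c) * g a k) := by
          rw [key P hP_antisym x g η hKP i (x l)]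
  have rhs : Dlow P x g η i k
      = ∑ a, (η * ∑ l, ∑ c, P (x i) (x l) * g l c * P (x a) (x c)) * g a k := rfl
  rw [rhs]
  simp only [Finset.mul_sum, Finset.sum_mul]
  refine Finset.sum_congr rfl fun a _ => ?_
  refine Finset.sum_congr rfl fun l _ => ?_
  rw [show (∑ c, ∑ j, Dlow P x g η i j *
      (η * (P (x j) (x l) * g l c * P (x a) (x c)) * g a k))
    = ∑ c, P (x i) (x l) * (η * g l c * P (x a) (x c) * g a k) from
      Finset.sum_congr rfl fun c _ => step2 a l c]
  refine Finset.sum_congr rfl fun c _ => by ring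

lemma gD_symm {A : Type*} [CommRing A]
    (P : A → A → A)
    {m : ℕ} (x : Fin m → A) (g : Fin m → Fin m → A)
    (hg_symm : ∀ i j, g i j = g j i)
    (η : A) (k j : Fin m) :
    (∑ i, g k i * Dlow P x g η i j) = ∑ i, g j i * Dlow P x g η i k := by
  unfold Dlow Dmat
  simp only [Finset.mul_sum, Finset.sum_mul]
  rw [Finset.sum_comm, swap34]
  refine Finset.sum_congr rfl fun o1 _ => ?_
  refine Finset.sum_congr rfl fun o2 _ => ?_
  refine Finset.sum_congr rfl fun o3 _ => ?_
  refine Finset.sum_congr rfl fun o4 _ => ?_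
  rw [hg_symm k o2, hg_symm o4 o3, hg_symm o1 j]
  ring

/-- In a Kähler–Poisson algebra, the map `𝒟 : Aᵐ → Aᵐ` is an orthogonal
projection: `𝒟² = 𝒟` and `g(𝒟X, Y) = g(X, 𝒟Y)`. -/
theorem Dmap_orthogonal_projection
    {A : Type*} [CommRing A]
    (P : A → A → A)
    (hP_antisym : ∀ a b, P a b = - P b a)
    (hP_add : ∀ a b c, P a (b + c) = P a b + P a c)
    (hP_leib : ∀ a b c, P a (b * c) = P a b * c + b * P a c)
    (hP_jacobi : ∀ a b c, P a (P b c) + P b (P c a) + P c (P a b) = 0)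
    {m : ℕ} (x : Fin m → A) (g : Fin m → Fin m → A)
    (hg_symm : ∀ i j, g i j = g j i)
    (η : A)
    (hKP : ∀ a b, η * (∑ i, ∑ j, ∑ k, ∑ l,
        P a (x i) * g i j * P (x j) (x k) * g k l * P (x l) b) = - P a b) :
    (∀ X : Fin m → A, Dmap P x g η (Dmap P x g η X) = Dmap P x g η X) ∧
    (∀ X Y : Fin m → A, gvec g (Dmap P x g η X) Y = gvec g X (Dmap P x g η Y)) := by
  constructor
  · intro X
    funext i
    show (∑ j, Dlow P x g η i j * ∑ k, Dlow P x g η j k * X k)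
        = ∑ k, Dlow P x g η i k * X k
    calc (∑ j, Dlow P x g η i j * ∑ k, Dlow P x g η j k * X k)
        = ∑ j, ∑ k, (Dlow P x g η i j * Dlow P x g η j k) * X k := by
          simp only [Finset.mul_sum]; exact Finset.sum_congr rfl fun j _ =>
            Finset.sum_congr rfl fun k _ => by ring
      _ = ∑ k, ∑ j, (Dlow P x g η i j * Dlow P x g η j k) * X k := Finset.sum_comm
      _ = ∑ k, (∑ j, Dlow P x g η i j * Dlow P x g η j k) * X k := by
          exact Finset.sum_congr rfl fun k _ => (Finset.sum_mul ..).symm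
      _ = ∑ k, Dlow P x g η i k * X k := Finset.sum_congr rfl fun k _ => by
          rw [Dlow_idem P hP_antisym x g η hKP i k]
  · intro X Y
    show (∑ i, ∑ j, (∑ k, Dlow P x g η i k * X k) * g i j * Y j)
        = ∑ i, ∑ j, X i * g i j * (∑ k, Dlow P x g η j k * Y k)
    calc (∑ i, ∑ j, (∑ k, Dlow P x g η i k * X k) * g i j * Y j)
        = ∑ i, ∑ j, ∑ k, X k * (g i j * Dlow P x g η i k) * Y j := by
          refine Finset.sum_congr rfl fun i _ => Finset.sum_congr rfl fun j _ => ?_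
          rw [Finset.sum_mul, Finset.sum_mul]
          exact Finset.sum_congr rfl fun k _ => by ring
      _ = ∑ k, ∑ j, X k * (∑ i, g j i * Dlow P x g η i k) * Y j := by
          rw [Finset.sum_comm]
          conv_lhs => rw [show (∑ j : Fin m, ∑ i : Fin m, ∑ k : Fin m,
              X k * (g i j * Dlow P x g η i k) * Y j)
            = ∑ j : Fin m, ∑ k : Fin m, ∑ i : Fin m,
              X k * (g i j * Dlow P x g η i k) * Y j from
            Finset.sum_congr rfl fun j _ => Finset.sum_comm]
          rw [Finset.sum_comm]
          refine Finset.sum_congr rfl fun k _ => ?_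
          refine Finset.sum_congr rfl fun j _ => ?_
          rw [Finset.mul_sum, Finset.sum_mul]
          refine Finset.sum_congr rfl fun i _ => ?_
          rw [hg_symm i j]
          try ring
      _ = ∑ k, ∑ j, X k * (∑ i, g k i * Dlow P x g η i j) * Y j := by
          refine Finset.sum_congr rfl fun k _ => Finset.sum_congr rfl fun j _ => ?_
          rw [gD_symm P x g hg_symm η k j]
      _ = ∑ i, ∑ j, X i * g i j * (∑ k, Dlow P x g η j k * Y k) := by
          refine Finset.sum_congr rfl fun k _ => ?_
          simp only [Finset.mul_sum, Finset.sum_mul]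
          rw [Finset.sum_comm]
          exact Finset.sum_congr rfl fun a _ => Finset.sum_congr rfl fun b _ => by ring
end

section
/- For a Kähler–Poisson algebra, the module $\mathfrak{g}$ of inner derivations is a finitely generated projective $\mathcal{A}$-module. -/
/-- The `A`-module of inner derivations of a Poisson algebra `(A, P)`,
i.e. the module generated by the derivations `a ↦ {c, a}`. -/
def innerDer {A : Type*} [CommRing A] (P : A → A → A) : Submodule A (A → A) :=
  Submodule.span A {d : A → A | ∃ c : A, d = P c}

/-- The metric on derivations induced by the matrix `g` and the distinguished
elements `x¹,…,xᵐ`:  `g(α,β) = α(xⁱ) g_{ij} β(xʲ)`. -/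
def gform {A : Type*} [CommRing A] {m : ℕ} (x : Fin m → A)
    (g : Fin m → Fin m → A) (α β : A → A) : A :=
  ∑ i, ∑ j, α (x i) * g i j * β (x j)

/-- For a Kähler–Poisson algebra, the module `𝔤` of inner derivations is a
finitely generated projective `A`-module. -/
theorem innerDer_finite_projective
    {A : Type*} [CommRing A]
    (P : A → A → A)
    (hP_antisym : ∀ a b, P a b = - P b a)
    (hP_add : ∀ a b c, P a (b + c) = P a b + P a c)
    (hP_leib : ∀ a b c, P a (b * c) = P a b * c + b * P a c)
    (hP_jacobi : ∀ a b c, P a (P b c) + P b (P c a) + P c (P a b) = 0)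
    {m : ℕ} (x : Fin m → A) (g : Fin m → Fin m → A)
    (hg_symm : ∀ i j, g i j = g j i)
    (η : A)
    (hKP : ∀ a b, η * (∑ i, ∑ j, ∑ k, ∑ l,
        P a (x i) * g i j * P (x j) (x k) * g k l * P (x l) b) = - P a b) :
    Module.Finite A (innerDer P) ∧ Module.Projective A (innerDer P) := by
  classical
  -- coefficient map
  set coeff : (A → A) → Fin m → A := fun f l =>
    -(η * ∑ i, ∑ j, ∑ k, f (x i) * g i j * P (x j) (x k) * g k l) with hcoeff
  have hgen : ∀ l : Fin m, P (x l) ∈ innerDer P := fun l =>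
    Submodule.subset_span ⟨x l, rfl⟩
  have key : ∀ f ∈ innerDer P, ∀ b, (∑ l, coeff f l * P (x l) b) = f b := by
    intro f hf
    refine Submodule.span_induction ?_ ?_ ?_ ?_ hf
    · rintro f ⟨c, rfl⟩ b
      have h := hKP c b
      calc ∑ l, coeff (P c) l * P (x l) b
          = -(η * ∑ i, ∑ j, ∑ k, ∑ l,
              P c (x i) * g i j * P (x j) (x k) * g k l * P (x l) b) := by
            simp only [hcoeff, neg_mul, Finset.sum_neg_distrib, Finset.mul_sum,
              Finset.sum_mul, neg_neg, neg_inj]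
            rw [Finset.sum_comm]
            refine Finset.sum_congr rfl fun i _ => ?_
            rw [Finset.sum_comm]
            refine Finset.sum_congr rfl fun j _ => ?_
            rw [Finset.sum_comm]
            refine Finset.sum_congr rfl fun k _ => ?_
            refine Finset.sum_congr rfl fun l _ => ?_
            ring
        _ = P c b := by rw [h]; ring
    · intro b; simp [hcoeff]
    · intro f1 f2 _ _ h1 h2 b
      have : ∀ l, coeff (f1 + f2) l = coeff f1 l + coeff f2 l := by
        intro l
        simp only [hcoeff, Pi.add_apply, add_mul, Finset.sum_add_distrib,
          mul_add, neg_add]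
      simp only [this, add_mul, Finset.sum_add_distrib, h1 b, h2 b, Pi.add_apply]
    · intro a f _ h1 b
      have : ∀ l, coeff (a • f) l = a * coeff f l := by
        intro l
        simp only [hcoeff, Pi.smul_apply, smul_eq_mul]
        rw [show (∑ i, ∑ j, ∑ k, a * f (x i) * g i j * P (x j) (x k) * g k l)
            = a * ∑ i, ∑ j, ∑ k, f (x i) * g i j * P (x j) (x k) * g k l by
          simp only [Finset.mul_sum]
          refine Finset.sum_congr rfl fun i _ => ?_
          refine Finset.sum_congr rfl fun j _ => ?_
          refine Finset.sum_congr rfl fun k _ => ?_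
          ring]
        ring
      simp only [this, mul_assoc, ← Finset.mul_sum, h1 b, Pi.smul_apply, smul_eq_mul]
  -- the linear maps
  let φ : (Fin m → A) →ₗ[A] innerDer P :=
    { toFun := fun v => ⟨∑ l, v l • P (x l),
        Submodule.sum_mem _ fun l _ => Submodule.smul_mem _ _ (hgen l)⟩
      map_add' := by
        intro v w
        apply Subtype.ext
        simp [add_smul, Finset.sum_add_distrib]
      map_smul' := by
        intro a v
        apply Subtype.ext
        simp [smul_smul, Finset.smul_sum] }
  let ψ : innerDer P →ₗ[A] (Fin m → A) :=
    { toFun := fun d => coeff d.val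
      map_add' := by
        intro d e
        funext l
        simp only [hcoeff, Submodule.coe_add, Pi.add_apply, add_mul,
          Finset.sum_add_distrib, mul_add, neg_add]
      map_smul' := by
        intro a d
        funext l
        simp only [hcoeff, Submodule.coe_smul, Pi.smul_apply, smul_eq_mul,
          RingHom.id_apply]
        rw [show (∑ i, ∑ j, ∑ k, a * (d : A → A) (x i) * g i j * P (x j) (x k) * g k l)
            = a * ∑ i, ∑ j, ∑ k, (d : A → A) (x i) * g i j * P (x j) (x k) * g k l by
          simp only [Finset.mul_sum]
          refine Finset.sum_congr rfl fun i _ => ?_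
          refine Finset.sum_congr rfl fun j _ => ?_
          refine Finset.sum_congr rfl fun k _ => ?_
          ring]
        ring }
  have hsplit : ∀ d : innerDer P, φ (ψ d) = d := by
    intro d
    apply Subtype.ext
    funext b
    have := key d.val d.2 b
    simpa [φ, ψ, Finset.sum_apply, Pi.smul_apply, smul_eq_mul] using this
  constructor
  · exact Module.Finite.of_surjective φ fun d => ⟨ψ d, hsplit d⟩
  · exact Module.Projective.of_split ψ φ (LinearMap.ext hsplit)
end

section
/- Let $\mathcal{K}=(\mathcal{A},\{x^1,\ldots,x^m\},g)$ be a Kähler–Poisson algebra and define $\mathcal{D}^i(a)=\eta\{x^k,a\}g_{kl}\{x^l,x^i\}$. Then the $\mathcal{A}$-module $\mathfrak{g}$ of inner derivations is generated by $\{\mathcal{D}^1,\ldots,\mathcal{D}^m\}$. -/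
/-- The derivation `𝒟ⁱ(a) = η {xᵏ, a} g_{kl} {xˡ, xⁱ}`. -/
def Dder {A : Type*} [CommRing A] {m : ℕ} (P : A → A → A) (x : Fin m → A)
    (g : Fin m → Fin m → A) (η : A) (i : Fin m) : A → A :=
  fun a => η * ∑ k, ∑ l, P (x k) a * g k l * P (x l) (x i)

private lemma sum_swap_aux {A : Type*} [AddCommMonoid A] {m : ℕ}
    (F : Fin m → Fin m → Fin m → Fin m → A) :
    (∑ j, ∑ k, ∑ l, ∑ i, F i j k l) = ∑ i, ∑ j, ∑ l, ∑ k, F i j k l := by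
  have h1 : ∀ j, (∑ k, ∑ l, ∑ i, F i j k l) = ∑ i, ∑ l, ∑ k, F i j k l := by
    intro j
    have h2 : (∑ k, ∑ l, ∑ i, F i j k l) = ∑ k, ∑ i, ∑ l, F i j k l :=
      Finset.sum_congr rfl fun k _ => Finset.sum_comm
    rw [h2, Finset.sum_comm]
    exact Finset.sum_congr rfl fun i _ => Finset.sum_comm
  calc (∑ j, ∑ k, ∑ l, ∑ i, F i j k l)
      = ∑ j, ∑ i, ∑ l, ∑ k, F i j k l := Finset.sum_congr rfl fun j _ => h1 j
    _ = ∑ i, ∑ j, ∑ l, ∑ k, F i j k l := Finset.sum_comm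

/-- In a Kähler–Poisson algebra, the module `𝔤` of inner derivations is
generated, as an `A`-module, by `𝒟¹, …, 𝒟ᵐ`. -/
theorem innerDer_generated_by_Dder
    {A : Type*} [CommRing A]
    (P : A → A → A)
    (hP_antisym : ∀ a b, P a b = - P b a)
    (hP_add : ∀ a b c, P a (b + c) = P a b + P a c)
    (hP_leib : ∀ a b c, P a (b * c) = P a b * c + b * P a c)
    (hP_jacobi : ∀ a b c, P a (P b c) + P b (P c a) + P c (P a b) = 0)
    {m : ℕ} (x : Fin m → A) (g : Fin m → Fin m → A)
    (hg_symm : ∀ i j, g i j = g j i)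
    (η : A)
    (hKP : ∀ a b, η * (∑ i, ∑ j, ∑ k, ∑ l,
        P a (x i) * g i j * P (x j) (x k) * g k l * P (x l) b) = - P a b) :
    Submodule.span A (Set.range (Dder P x g η)) = innerDer P := by
  apply le_antisymm
  · rw [Submodule.span_le]
    rintro d ⟨i, rfl⟩
    have hd : Dder P x g η i = ∑ k, ∑ l, (η * g k l * P (x l) (x i)) • P (x k) := by
      funext a
      simp only [Dder, Finset.sum_apply, Pi.smul_apply, smul_eq_mul, Finset.mul_sum]
      exact Finset.sum_congr rfl fun k _ => Finset.sum_congr rfl fun l _ => by ring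
    rw [hd]
    exact Submodule.sum_mem _ fun k _ => Submodule.sum_mem _ fun l _ =>
      Submodule.smul_mem _ _ (Submodule.subset_span ⟨x k, rfl⟩)
  · rw [innerDer, Submodule.span_le]
    rintro d ⟨c, rfl⟩
    have key : P c = ∑ j, (∑ i, P c (x i) * g i j) • Dder P x g η j := by
      funext b
      have hL : P c b = ∑ i, ∑ j, ∑ k, ∑ l,
          -(η * (P c (x i) * g i j * P (x j) (x k) * g k l * P (x l) b)) := by
        have h1 : P c b = -(η * (∑ i, ∑ j, ∑ k, ∑ l,
            P c (x i) * g i j * P (x j) (x k) * g k l * P (x l) b)) := by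
          linear_combination hKP c b
        rw [h1]
        simp [Finset.mul_sum]
      have hR : (∑ j, (∑ i, P c (x i) * g i j) *
            (η * ∑ k, ∑ l, P (x k) b * g k l * P (x l) (x j)))
          = ∑ i, ∑ j, ∑ l, ∑ k,
            (P c (x i) * g i j) * (η * (P (x k) b * g k l * P (x l) (x j))) := by
        simp only [Finset.mul_sum, Finset.sum_mul]
        exact sum_swap_aux (fun i j k l => (P c (x i) * g i j) * (η * (P (x k) b * g k l * P (x l) (x j))))
      simp only [Finset.sum_apply, Pi.smul_apply, smul_eq_mul, Dder]
      rw [hR, hL]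
      refine Finset.sum_congr rfl fun i _ => Finset.sum_congr rfl fun j _ =>
        Finset.sum_congr rfl fun k _ => Finset.sum_congr rfl fun l _ => ?_
      rw [hP_antisym (x j) (x k), hg_symm k l]
      ring
    rw [key]
    exact Submodule.sum_mem _ fun j _ => Submodule.smul_mem _ _
      (Submodule.subset_span ⟨j, rfl⟩)
end

section
/- Let $(\phi,\psi)$ be a morphism of Kähler–Poisson algebras from $(\mathcal{A},\{x^i\},g)$ to $(\mathcal{A}',\{y^j\},g')$ such that any $\alpha'\in\mathfrak{g}'$ vanishing on the image of $\phi$ is zero. Then $\psi(a\{b,\cdot\}_{\mathcal{A}})=\phi(a)\{\phi(b),\cdot\}_{\mathcal{A}'}$ for all $a,b\in\mathcal{A}$; i.e., $\psi$ is determined by $\phi$. -/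
/-- For a morphism `(φ, ψ)` of Kähler–Poisson algebras such that any
derivation in `𝔤'` vanishing on the image of `φ` is zero, the map `ψ` is
determined by `φ`: `ψ(a{b,·}) = φ(a){φ(b),·}`. -/
theorem kahlerPoisson_morphism_psi_determined
    {K : Type*} [Field K]
    {A : Type*} [CommRing A] [Algebra K A]
    {A' : Type*} [CommRing A'] [Algebra K A']
    (P : A → A → A)
    (hP_antisym : ∀ a b, P a b = - P b a)
    (hP_add : ∀ a b c, P a (b + c) = P a b + P a c)
    (hP_leib : ∀ a b c, P a (b * c) = P a b * c + b * P a c)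
    (hP_jacobi : ∀ a b c, P a (P b c) + P b (P c a) + P c (P a b) = 0)
    (P' : A' → A' → A')
    (hP'_antisym : ∀ a b, P' a b = - P' b a)
    (hP'_add : ∀ a b c, P' a (b + c) = P' a b + P' a c)
    (hP'_leib : ∀ a b c, P' a (b * c) = P' a b * c + b * P' a c)
    (hP'_jacobi : ∀ a b c, P' a (P' b c) + P' b (P' c a) + P' c (P' a b) = 0)
    {m : ℕ} (x : Fin m → A) (g : Fin m → Fin m → A)
    (hg_symm : ∀ i j, g i j = g j i) (η : A)
    (hKP : ∀ a b, η * (∑ i, ∑ j, ∑ k, ∑ l,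
        P a (x i) * g i j * P (x j) (x k) * g k l * P (x l) b) = - P a b)
    {m' : ℕ} (y : Fin m' → A') (g' : Fin m' → Fin m' → A')
    (hg'_symm : ∀ i j, g' i j = g' j i) (η' : A')
    (hKP' : ∀ a b, η' * (∑ i, ∑ j, ∑ k, ∑ l,
        P' a (y i) * g' i j * P' (y j) (y k) * g' k l * P' (y l) b) = - P' a b)
    -- the morphism (φ, ψ)
    (φ : A →ₐ[K] A')
    (hφP : ∀ a b, φ (P a b) = P' (φ a) (φ b))
    (hfin : ∀ a ∈ Algebra.adjoin K (Set.range x), φ a ∈ Algebra.adjoin K (Set.range y))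
    (ψ : innerDer P → innerDer P')
    (hψ_add : ∀ α β, ψ (α + β) = ψ α + ψ β)
    (hψ_smul : ∀ (a : A) (α : innerDer P), ψ (a • α) = φ a • ψ α)
    (hψ_anchor : ∀ (α : innerDer P) (a : A),
      φ ((α : A → A) a) = (ψ α : A' → A') (φ a))
    (hψ_lie : ∀ α β γ : innerDer P,
      ((γ : A → A) = fun a => (α : A → A) ((β : A → A) a) - (β : A → A) ((α : A → A) a)) →
      ((ψ γ : A' → A') =
        fun a => (ψ α : A' → A') ((ψ β : A' → A') a) - (ψ β : A' → A') ((ψ α : A' → A') a)))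
    (hψ_metric : ∀ α β : innerDer P,
      φ (gform x g (α : A → A) (β : A → A)) = gform y g' (ψ α : A' → A') (ψ β : A' → A'))
    -- derivations are determined by their values on the image of φ
    (hnd : ∀ α' : innerDer P', (∀ a : A, (α' : A' → A') (φ a) = 0) → α' = 0) :
    ∀ (a b : A) (α : innerDer P), ((α : A → A) = fun c => a * P b c) →
      ((ψ α : A' → A') = fun c => φ a * P' (φ b) c) := by
  intro a b α hα
  have hmem : P' (φ b) ∈ innerDer P' := Submodule.subset_span ⟨φ b, rfl⟩
  set β : innerDer P' := ⟨P' (φ b), hmem⟩ with hβ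
  have h0 : ψ α - φ a • β = 0 := by
    apply hnd
    intro c
    have h1 := hψ_anchor α c
    rw [hα] at h1
    simp only [Submodule.coe_sub, Submodule.coe_smul, Pi.sub_apply, Pi.smul_apply, hβ,
      smul_eq_mul]
    rw [← h1, map_mul, hφP]; ring
  have h2 : ψ α = φ a • β := sub_eq_zero.mp h0
  funext c
  rw [h2]
  rfl
end

section
/- Let $\mathcal{K}$ be a Kähler–Poisson algebra with Levi-Civita connection $\nabla$ on $\mathfrak{g}$, and let $\mathcal{D}^i(a)=\eta\{x^k,a\}g_{kl}\{x^l,x^i\}$ and $\mathcal{D}^{ij}=g(\mathcal{D}^i,\mathcal{D}^j)$. Then $g([\mathcal{D}^i,\mathcal{D}^j],\mathcal{D}^k)=\mathcal{D}^i(\mathcal{D}^{jk})-\mathcal{D}^j(\mathcal{D}^{ik})$, and consequently the Levi-Civita connection is given by $\nabla_{\mathcal{D}^i}\mathcal{D}^j=\tfrac12\mathcal{D}^i(\mathcal{D}^{jk})\mathcal{D}_k-\tfrac12\mathcal{D}^j(\mathcal{D}^{ik})\mathcal{D}_k+\tfrac12\mathcal{D}^k(\mathcal{D}^{ij})\mathcal{D}_k$,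 where $\mathcal{D}_k=g_{kl}\mathcal{D}^l$. -/
section KPHelpers

lemma KP_sum_swap4 {A : Type*} [AddCommMonoid A] {m : ℕ}
    (f : Fin m → Fin m → Fin m → Fin m → A) :
    ∑ i, ∑ j, ∑ k, ∑ l, f i j k l = ∑ k, ∑ l, ∑ i, ∑ j, f i j k l := by
  calc ∑ i, ∑ j, ∑ k, ∑ l, f i j k l
      = ∑ i, ∑ k, ∑ j, ∑ l, f i j k l :=
        Finset.sum_congr rfl fun i _ => Finset.sum_comm
    _ = ∑ i, ∑ k, ∑ l, ∑ j, f i j k l :=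
        Finset.sum_congr rfl fun i _ => Finset.sum_congr rfl fun k _ => Finset.sum_comm
    _ = ∑ k, ∑ i, ∑ l, ∑ j, f i j k l := Finset.sum_comm
    _ = ∑ k, ∑ l, ∑ i, ∑ j, f i j k l :=
        Finset.sum_congr rfl fun k _ => Finset.sum_comm

variable {A : Type*} [CommRing A] {P : A → A → A}

lemma KP_P_zero' (hP_add : ∀ a b c, P a (b + c) = P a b + P a c) (a : A) : P a 0 = 0 := by
  have h := hP_add a 0 0
  rw [add_zero] at h
  exact left_eq_add.mp h

lemma KP_P_neg (hP_add : ∀ a b c, P a (b + c) = P a b + P a c) (a u : A) :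
    P a (-u) = - P a u := by
  have h := hP_add a u (-u)
  rw [add_neg_cancel, KP_P_zero' hP_add] at h
  linear_combination -h

lemma innerDer_zero (hP_add : ∀ a b c, P a (b + c) = P a b + P a c)
    {μ : A → A} (hμ : μ ∈ innerDer P) : μ 0 = 0 := by
  induction hμ using Submodule.span_induction with
  | mem d hd => obtain ⟨c, rfl⟩ := hd; exact KP_P_zero' hP_add c
  | zero => rfl
  | add α β _ _ ha hb => simp [Pi.add_apply, ha, hb]
  | smul c α _ ha => simp [Pi.smul_apply, smul_eq_mul, ha]

lemma innerDer_additive (hP_add : ∀ a b c, P a (b + c) = P a b + P a c)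
    {μ : A → A} (hμ : μ ∈ innerDer P) (u v : A) : μ (u + v) = μ u + μ v := by
  induction hμ using Submodule.span_induction with
  | mem d hd => obtain ⟨c, rfl⟩ := hd; exact hP_add c u v
  | zero => simp
  | add α β _ _ ha hb => simp only [Pi.add_apply, ha, hb]; ring
  | smul c α _ ha => simp only [Pi.smul_apply, smul_eq_mul, ha]; ring

lemma innerDer_leib (hP_leib : ∀ a b c, P a (b * c) = P a b * c + b * P a c)
    {μ : A → A} (hμ : μ ∈ innerDer P) (u v : A) : μ (u * v) = μ u * v + u * μ v := by
  induction hμ using Submodule.span_induction with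
  | mem d hd => obtain ⟨c, rfl⟩ := hd; exact hP_leib c u v
  | zero => simp
  | add α β _ _ ha hb => simp only [Pi.add_apply, ha, hb]; ring
  | smul c α _ ha => simp only [Pi.smul_apply, smul_eq_mul, ha]; ring

lemma KP_comm_gen_mem
    (hP_antisym : ∀ a b, P a b = - P b a)
    (hP_add : ∀ a b c, P a (b + c) = P a b + P a c)
    (hP_leib : ∀ a b c, P a (b * c) = P a b * c + b * P a c)
    (hP_jacobi : ∀ a b c, P a (P b c) + P b (P c a) + P c (P a b) = 0)
    (c : A) {β : A → A} (hβ : β ∈ innerDer P) :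
    (fun a => P c (β a) - β (P c a)) ∈ innerDer P := by
  induction hβ using Submodule.span_induction with
  | mem d hd =>
      obtain ⟨b, rfl⟩ := hd
      have h : (fun a => P c (P b a) - P b (P c a)) = P (P c b) := by
        funext a
        have hj := hP_jacobi c b a
        rw [hP_antisym a c, KP_P_neg hP_add, hP_antisym a (P c b)] at hj
        linear_combination hj
      rw [h]; exact Submodule.subset_span ⟨P c b, rfl⟩
  | zero =>
      have h : (fun a => P c ((0:A→A) a) - (0:A→A) (P c a)) = (0:A→A) := by
        funext a; simp [KP_P_zero' hP_add]
      rw [h]; exact zero_mem _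
  | add α β hα hβ ihα ihβ =>
      have h : (fun a => P c ((α+β) a) - (α+β) (P c a)) =
          (fun a => P c (α a) - α (P c a)) + (fun a => P c (β a) - β (P c a)) := by
        funext a; simp only [Pi.add_apply, hP_add]; ring
      rw [h]; exact add_mem ihα ihβ
  | smul b β hβ ih =>
      have h : (fun a => P c ((b•β) a) - (b•β) (P c a)) =
          b • (fun a => P c (β a) - β (P c a)) + (P c b) • β := by
        funext a; simp only [Pi.add_apply, Pi.smul_apply, smul_eq_mul, hP_leib]; ring
      rw [h]; exact add_mem (Submodule.smul_mem _ _ ih) (Submodule.smul_mem _ _ hβ)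

lemma KP_comm_mem
    (hP_antisym : ∀ a b, P a b = - P b a)
    (hP_add : ∀ a b c, P a (b + c) = P a b + P a c)
    (hP_leib : ∀ a b c, P a (b * c) = P a b * c + b * P a c)
    (hP_jacobi : ∀ a b c, P a (P b c) + P b (P c a) + P c (P a b) = 0)
    {α β : A → A} (hα : α ∈ innerDer P) (hβ : β ∈ innerDer P) :
    (fun a => α (β a) - β (α a)) ∈ innerDer P := by
  induction hα using Submodule.span_induction with
  | mem d hd =>
      obtain ⟨c, rfl⟩ := hd
      exact KP_comm_gen_mem hP_antisym hP_add hP_leib hP_jacobi c hβ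
  | zero =>
      have h : (fun a => (0:A→A) (β a) - β ((0:A→A) a)) = (0:A→A) := by
        funext a; simp [innerDer_zero hP_add hβ]
      rw [h]; exact zero_mem _
  | add α₁ α₂ h1 h2 ih1 ih2 =>
      have h : (fun a => (α₁+α₂) (β a) - β ((α₁+α₂) a)) =
          (fun a => α₁ (β a) - β (α₁ a)) + (fun a => α₂ (β a) - β (α₂ a)) := by
        funext a
        simp only [Pi.add_apply, innerDer_additive hP_add hβ]; ring
      rw [h]; exact add_mem ih1 ih2
  | smul b α₁ h1 ih =>
      have h : (fun a => (b•α₁) (β a) - β ((b•α₁) a)) =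
          b • (fun a => α₁ (β a) - β (α₁ a)) + (-(β b)) • α₁ := by
        funext a
        simp only [Pi.add_apply, Pi.smul_apply, smul_eq_mul]
        rw [innerDer_leib hP_leib hβ]
        ring
      rw [h]; exact add_mem (Submodule.smul_mem _ _ ih) (Submodule.smul_mem _ _ h1)

variable {m : ℕ} (x : Fin m → A) (g : Fin m → Fin m → A) (η : A)

lemma KP_Dder_apply_x (hP_antisym : ∀ a b, P a b = - P b a)
    (hg_symm : ∀ i j, g i j = g j i) (j k : Fin m) :
    Dder P x g η j (x k) = Dmat P x g η j k := by
  unfold Dder Dmat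
  congr 1
  rw [Finset.sum_comm]
  refine Finset.sum_congr rfl fun p _ => Finset.sum_congr rfl fun q _ => ?_
  rw [hP_antisym (x j) (x p), hP_antisym (x k) (x q), hg_symm p q]
  ring

lemma KP_Dmat_symm (hP_antisym : ∀ a b, P a b = - P b a)
    (hg_symm : ∀ i j, g i j = g j i) (j k : Fin m) :
    Dmat P x g η j k = Dmat P x g η k j := by
  unfold Dmat
  congr 1
  rw [Finset.sum_comm]
  refine Finset.sum_congr rfl fun p _ => Finset.sum_congr rfl fun q _ => ?_
  rw [hP_antisym (x j) (x q), hP_antisym (x k) (x p), hg_symm q p]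
  ring

lemma KP_Dder_mem (i : Fin m) : Dder P x g η i ∈ innerDer P := by
  have h : Dder P x g η i = ∑ k, (η * ∑ l, g k l * P (x l) (x i)) • P (x k) := by
    funext a
    simp only [Finset.sum_apply, Pi.smul_apply, smul_eq_mul, Dder]
    rw [Finset.mul_sum]
    refine Finset.sum_congr rfl fun k _ => ?_
    rw [Finset.mul_sum, Finset.mul_sum, Finset.sum_mul]
    refine Finset.sum_congr rfl fun l _ => ?_
    ring
  rw [h]
  exact Submodule.sum_mem _ fun k _ =>
    Submodule.smul_mem _ _ (Submodule.subset_span ⟨x k, rfl⟩)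

lemma KP_gform_symm (hg_symm : ∀ i j, g i j = g j i) (α β : A → A) :
    gform x g α β = gform x g β α := by
  unfold gform
  rw [Finset.sum_comm]
  refine Finset.sum_congr rfl fun i _ => Finset.sum_congr rfl fun j _ => ?_
  rw [hg_symm j i]; ring

lemma KP_g_repr
    (hP_antisym : ∀ a b, P a b = - P b a)
    (hKP : ∀ a b, η * (∑ i, ∑ j, ∑ k, ∑ l,
        P a (x i) * g i j * P (x j) (x k) * g k l * P (x l) b) = - P a b)
    {μ : A → A} (hμ : μ ∈ innerDer P) (r : Fin m) :
    gform x g μ (Dder P x g η r) = μ (x r) := by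
  induction hμ using Submodule.span_induction with
  | mem d hd =>
      obtain ⟨c, rfl⟩ := hd
      have h := hKP c (x r)
      have e : gform x g (P c) (Dder P x g η r) =
          ∑ i, ∑ j, ∑ k, ∑ l,
            -(η * (P c (x i) * g i j * P (x j) (x k) * g k l * P (x l) (x r))) := by
        unfold gform Dder
        simp only [Finset.mul_sum]
        refine Finset.sum_congr rfl fun i _ => Finset.sum_congr rfl fun j _ =>
          Finset.sum_congr rfl fun p _ => Finset.sum_congr rfl fun q _ => ?_
        rw [hP_antisym (x p) (x j)]
        ring
      rw [e]
      simp only [Finset.sum_neg_distrib, ← Finset.mul_sum]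
      rw [h, neg_neg]
  | zero => simp [gform]
  | add α β _ _ ha hb =>
      have e : gform x g (α + β) (Dder P x g η r)
          = gform x g α (Dder P x g η r) + gform x g β (Dder P x g η r) := by
        unfold gform
        rw [← Finset.sum_add_distrib]
        refine Finset.sum_congr rfl fun i _ => ?_
        rw [← Finset.sum_add_distrib]
        refine Finset.sum_congr rfl fun j _ => ?_
        simp only [Pi.add_apply]; ring
      rw [e, ha, hb]; rfl
  | smul c α _ ha =>
      have e : gform x g (c • α) (Dder P x g η r)
          = c * gform x g α (Dder P x g η r) := by
        unfold gform
        rw [Finset.mul_sum]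
        refine Finset.sum_congr rfl fun i _ => ?_
        rw [Finset.mul_sum]
        refine Finset.sum_congr rfl fun j _ => ?_
        simp only [Pi.smul_apply, smul_eq_mul]; ring
      rw [e, ha]; rfl

lemma KP_repr
    (hP_antisym : ∀ a b, P a b = - P b a)
    (hKP : ∀ a b, η * (∑ i, ∑ j, ∑ k, ∑ l,
        P a (x i) * g i j * P (x j) (x k) * g k l * P (x l) b) = - P a b)
    {μ : A → A} (hμ : μ ∈ innerDer P) (a : A) :
    μ a = ∑ k, (∑ l, g k l * μ (x l)) * Dder P x g η k a := by
  induction hμ using Submodule.span_induction with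
  | mem d hd =>
      obtain ⟨c, rfl⟩ := hd
      have h := hKP a c
      have e : ∑ k, (∑ l, g k l * P c (x l)) * Dder P x g η k a
          = ∑ k, ∑ l, ∑ i, ∑ j,
              η * (P a (x i) * g i j * P (x j) (x k) * g k l * P (x l) c) := by
        refine Finset.sum_congr rfl fun k _ => ?_
        unfold Dder
        rw [Finset.sum_mul]
        refine Finset.sum_congr rfl fun l _ => ?_
        simp only [Finset.mul_sum, Finset.sum_mul]
        refine Finset.sum_congr rfl fun i _ => Finset.sum_congr rfl fun j _ => ?_
        rw [hP_antisym (x i) a, hP_antisym (x l) c]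
        ring
      rw [e, ← KP_sum_swap4]
      simp only [← Finset.mul_sum]
      rw [h, hP_antisym c a]
  | zero => simp
  | add α β _ _ ha hb =>
      simp only [Pi.add_apply]
      rw [ha, hb, ← Finset.sum_add_distrib]
      refine Finset.sum_congr rfl fun k _ => ?_
      rw [← add_mul, ← Finset.sum_add_distrib]
      congr 1
      refine Finset.sum_congr rfl fun l _ => ?_
      ring
  | smul c α _ ha =>
      simp only [Pi.smul_apply, smul_eq_mul]
      rw [ha, Finset.mul_sum]
      refine Finset.sum_congr rfl fun k _ => ?_
      simp only [Finset.sum_mul, Finset.mul_sum]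
      refine Finset.sum_congr rfl fun l _ => ?_
      ring

end KPHelpers

/-- For a Kähler–Poisson algebra with Levi-Civita connection `∇` on the
module `𝔤` of inner derivations: `g([𝒟ⁱ,𝒟ʲ],𝒟ᵏ) = 𝒟ⁱ(𝒟ʲᵏ) - 𝒟ʲ(𝒟ⁱᵏ)`,
and consequently
`∇_{𝒟ⁱ}𝒟ʲ = ½𝒟ⁱ(𝒟ʲᵏ)𝒟ₖ - ½𝒟ʲ(𝒟ⁱᵏ)𝒟ₖ + ½𝒟ᵏ(𝒟ⁱʲ)𝒟ₖ` (sum over `k`),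
where `𝒟ₖ = g_{kl}𝒟ˡ`. -/
theorem leviCivita_on_Dder
    {A : Type*} [CommRing A]
    (P : A → A → A)
    (hP_antisym : ∀ a b, P a b = - P b a)
    (hP_add : ∀ a b c, P a (b + c) = P a b + P a c)
    (hP_leib : ∀ a b c, P a (b * c) = P a b * c + b * P a c)
    (hP_jacobi : ∀ a b c, P a (P b c) + P b (P c a) + P c (P a b) = 0)
    {m : ℕ} (x : Fin m → A) (g : Fin m → Fin m → A)
    (hg_symm : ∀ i j, g i j = g j i)
    (η : A)
    (hKP : ∀ a b, η * (∑ i, ∑ j, ∑ k, ∑ l,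
        P a (x i) * g i j * P (x j) (x k) * g k l * P (x l) b) = - P a b)
    [Invertible (2 : A)]
    (nabla : innerDer P → innerDer P → innerDer P)
    (hc_lin1 : ∀ (a : A) (α β μ : innerDer P),
      nabla (a • α + β) μ = a • nabla α μ + nabla β μ)
    (hc_add2 : ∀ (α μ ν : innerDer P), nabla α (μ + ν) = nabla α μ + nabla α ν)
    (hc_leib : ∀ (α : innerDer P) (a : A) (μ : innerDer P),
      nabla α (a • μ) = a • nabla α μ + ((α : A → A) a) • μ)
    (hmetric : ∀ α β γ : innerDer P,
      (α : A → A) (gform x g (β : A → A) (γ : A → A)) =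
        gform x g ((nabla α β : innerDer P) : A → A) (γ : A → A)
        + gform x g (β : A → A) ((nabla α γ : innerDer P) : A → A))
    (htf : ∀ α β γ : innerDer P,
      ((γ : A → A) = fun a => (α : A → A) ((β : A → A) a) - (β : A → A) ((α : A → A) a)) →
      nabla α β - nabla β α = γ) :
    (∀ i j k : Fin m,
      gform x g
        (fun a => Dder P x g η i (Dder P x g η j a) - Dder P x g η j (Dder P x g η i a))
        (Dder P x g η k)
      = Dder P x g η i (Dmat P x g η j k) - Dder P x g η j (Dmat P x g η i k)) ∧
    (∀ (δ : Fin m → innerDer P), (∀ i, ((δ i : innerDer P) : A → A) = Dder P x g η i) →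
      ∀ i j : Fin m,
        nabla (δ i) (δ j) =
          ∑ k, (⅟(2 : A) *
              (Dder P x g η i (Dmat P x g η j k) - Dder P x g η j (Dmat P x g η i k)
                + Dder P x g η k (Dmat P x g η i j))) •
            (∑ l, g k l • δ l)) := by
  constructor
  · intro i j k
    have hcm : (fun a => Dder P x g η i (Dder P x g η j a)
        - Dder P x g η j (Dder P x g η i a)) ∈ innerDer P :=
      KP_comm_mem hP_antisym hP_add hP_leib hP_jacobi
        (KP_Dder_mem x g η i) (KP_Dder_mem x g η j)
    rw [KP_g_repr x g η hP_antisym hKP hcm k]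
    show Dder P x g η i (Dder P x g η j (x k)) - Dder P x g η j (Dder P x g η i (x k)) = _
    rw [KP_Dder_apply_x x g η hP_antisym hg_symm j k,
      KP_Dder_apply_x x g η hP_antisym hg_symm i k]
  · intro δ hδ i j
    have hbr : ∀ p q r : Fin m,
        ((nabla (δ p) (δ q) : innerDer P) : A → A) (x r)
          - ((nabla (δ q) (δ p) : innerDer P) : A → A) (x r)
        = Dder P x g η p (Dmat P x g η q r) - Dder P x g η q (Dmat P x g η p r) := by
      intro p q r
      have hmem : (fun a => Dder P x g η p (Dder P x g η q a)
          - Dder P x g η q (Dder P x g η p a)) ∈ innerDer P :=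
        KP_comm_mem hP_antisym hP_add hP_leib hP_jacobi
          (KP_Dder_mem x g η p) (KP_Dder_mem x g η q)
      have h := htf (δ p) (δ q) ⟨_, hmem⟩ (by rw [hδ p, hδ q])
      have h2 := congrFun (congrArg (Subtype.val) h) (x r)
      simp only [Submodule.coe_sub, Pi.sub_apply] at h2
      rw [KP_Dder_apply_x x g η hP_antisym hg_symm q r,
        KP_Dder_apply_x x g η hP_antisym hg_symm p r] at h2
      exact h2
    have hN : ∀ p q r : Fin m,
        Dder P x g η p (Dmat P x g η q r) =
          ((nabla (δ p) (δ q) : innerDer P) : A → A) (x r)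
          + ((nabla (δ p) (δ r) : innerDer P) : A → A) (x q) := by
      intro p q r
      have h := hmetric (δ p) (δ q) (δ r)
      rw [hδ p, hδ q, hδ r] at h
      rw [KP_g_repr x g η hP_antisym hKP (KP_Dder_mem x g η q) r] at h
      rw [KP_Dder_apply_x x g η hP_antisym hg_symm q r] at h
      rw [KP_g_repr x g η hP_antisym hKP (nabla (δ p) (δ q)).2 r] at h
      rw [KP_gform_symm x g hg_symm (Dder P x g η q)
        ((nabla (δ p) (δ r) : innerDer P) : A → A)] at h
      rw [KP_g_repr x g η hP_antisym hKP (nabla (δ p) (δ r)).2 q] at h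
      exact h
    have hval : ∀ k : Fin m, ((nabla (δ i) (δ j) : innerDer P) : A → A) (x k)
        = ⅟(2:A) * (Dder P x g η i (Dmat P x g η j k) - Dder P x g η j (Dmat P x g η i k)
            + Dder P x g η k (Dmat P x g η i j)) := by
      intro k
      have E1 := hN i j k
      have E2 := hN j i k
      have E3 := hN k i j
      have B1 := hbr i j k
      have B2 := hbr i k j
      have B3 := hbr j k i
      have S1 : Dder P x g η i (Dmat P x g η k j) = Dder P x g η i (Dmat P x g η j k) :=
        congrArg _ (KP_Dmat_symm x g η hP_antisym hg_symm k j)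
      have S2 : Dder P x g η k (Dmat P x g η j i) = Dder P x g η k (Dmat P x g η i j) :=
        congrArg _ (KP_Dmat_symm x g η hP_antisym hg_symm j i)
      have S3 : Dder P x g η j (Dmat P x g η k i) = Dder P x g η j (Dmat P x g η i k) :=
        congrArg _ (KP_Dmat_symm x g η hP_antisym hg_symm k i)
      have h2 : (2:A) * ⅟(2:A) = 1 := mul_invOf_self 2
      have heq : 2 * ((nabla (δ i) (δ j) : innerDer P) : A → A) (x k)
          = Dder P x g η i (Dmat P x g η j k) - Dder P x g η j (Dmat P x g η i k)
            + Dder P x g η k (Dmat P x g η i j) := by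
        linear_combination -E1 - E2 + E3 + B1 - B2 - B3 - S1 + S2 - S3
      linear_combination ⅟(2:A) * heq
        - (((nabla (δ i) (δ j) : innerDer P) : A → A) (x k)) * h2
    have hfun : ((nabla (δ i) (δ j) : innerDer P) : A → A)
        = (((∑ k, (⅟(2 : A) *
            (Dder P x g η i (Dmat P x g η j k) - Dder P x g η j (Dmat P x g η i k)
              + Dder P x g η k (Dmat P x g η i j))) •
            (∑ l, g k l • δ l)) : innerDer P) : A → A) := by
      funext a
      rw [KP_repr x g η hP_antisym hKP (nabla (δ i) (δ j)).2 a]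
      simp only [hval]
      simp only [AddSubmonoidClass.coe_finset_sum, SetLike.val_smul, Finset.sum_apply,
        Pi.smul_apply, smul_eq_mul, hδ]
      simp only [Finset.sum_mul, Finset.mul_sum]
      rw [Finset.sum_comm]
      refine Finset.sum_congr rfl fun k _ => Finset.sum_congr rfl fun l _ => ?_
      rw [hg_symm k l]
      ring
    exact Subtype.ext hfun
end
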